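/- For all natural numbers r ≥ 1 and q ≥ 0, the intersection matrix of the star-shaped weighted tree Λ_{0,q,r} — which has a central vertex of weight −2 and three legs attached to it: a leg consisting of a single vertex of weight −2; a leg consisting of a single vertex of weight −(r+3); and a leg which is a path whose vertices, listed in order starting from the one adjacent to the central vertex, have weights −2 (repeated q times), −3, −2 (repeated r−1 times), −(q+5) — is negative definite. -/

import Mathlib

/-- The vertex type of a star-shaped tree with `m` legs, leg `i` consisting of a path of
`n i` vertices.  `none` is the central vertex; `some ⟨i, j⟩` is the `j`-th vertex of the
`i`-th leg (the vertex `j = 0` being the one joined to the central vertex by an edge). -/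
abbrev StarVertex (m : ℕ) (n : Fin m → ℕ) : Type := Option ((i : Fin m) × Fin (n i))

/-- The intersection matrix of the star-shaped weighted tree with `m` legs, where the central
vertex has weight `w0` and the `j`-th vertex of the `i`-th leg has weight `w i j`:  diagonal
entries are the weights, off-diagonal entries are `1` for vertices joined by an edge
(consecutive vertices of a leg, or the central vertex and the initial vertex of a leg)
and `0` otherwise. -/
def starMatrix (m : ℕ) (n : Fin m → ℕ) (w0 : ℤ) (w : Fin m → ℕ → ℤ) :
    Matrix (StarVertex m n) (StarVertex m n) ℤ :=
  Matrix.of fun v v' =>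
    match v, v' with
    | none, none => w0
    | none, some ⟨_, j⟩ => if (j : ℕ) = 0 then 1 else 0
    | some ⟨_, j⟩, none => if (j : ℕ) = 0 then 1 else 0
    | some ⟨i, j⟩, some ⟨i', j'⟩ =>
        if (i : ℕ) = (i' : ℕ) then
          if (j : ℕ) = (j' : ℕ) then w i (j : ℕ)
          else if (j : ℕ) + 1 = (j' : ℕ) ∨ (j' : ℕ) + 1 = (j : ℕ) then 1 else 0
        else 0

/-- The weights along a leg consisting of a chain of `k` vertices of weight `-2` followed by a
terminal vertex of weight `-a` (a path of `k + 1` vertices). -/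
def chainW (k : ℕ) (a : ℤ) (j : ℕ) : ℤ := if j < k then -2 else -a


open Finset

/-- real weight function of the long leg -/
def Wfun (q r : ℕ) : ℕ → ℝ := fun j =>
  if j < q then -2 else if j = q then -3 else if j < q + r then -2 else -((q:ℝ)+5)

/-- the values of `x` along the long leg, as a function on `ℕ` -/
def zfun (q r : ℕ) (x : StarVertex 3 ![1, 1, q + r + 1] → ℝ) : ℕ → ℝ := fun j =>
  if h : j < q + r + 1 then x (some ⟨2, ⟨j, h⟩⟩) else 0


lemma trunc_sum (N : ℕ) (g : ℕ → ℝ) :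
    ∑ j ∈ range N, (if j + 1 < N then g j else 0) = ∑ j ∈ range (N-1), g j := by
  rw [← Finset.sum_filter]
  congr 1
  ext a
  simp only [Finset.mem_filter, Finset.mem_range]
  omega

lemma double_fin_to_range (N : ℕ) (f : ℕ → ℕ → ℝ) :
    ∑ j : Fin N, ∑ j' : Fin N, f (j:ℕ) (j':ℕ)
      = ∑ j ∈ range N, ∑ j' ∈ range N, f j j' := by
  rw [Fin.sum_univ_eq_sum_range (fun a => ∑ j' : Fin N, f a (j':ℕ))]
  exact Finset.sum_congr rfl fun j _ => Fin.sum_univ_eq_sum_range (f j) N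

lemma path_sum_range (N : ℕ) (W z : ℕ → ℝ) :
    ∑ j ∈ range N, ∑ j' ∈ range N,
      (if j = j' then W j
        else if j + 1 = j' ∨ j' + 1 = j then 1 else 0) * z j * z j'
    = ∑ j ∈ range N, W j * z j ^ 2 + 2 * ∑ j ∈ range (N-1), z j * z (j+1) := by
  have split : ∀ j j' : ℕ,
      ((if j = j' then W j else if j + 1 = j' ∨ j' + 1 = j then (1:ℝ) else 0) * z j * z j')
      = (if j' = j then W j * z j * z j' else 0) + (if j' = j + 1 then z j * z j' else 0)
        + (if j = j' + 1 then z j * z j' else 0) := by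
    intro j j'
    have : (if j = j' then W j else if j + 1 = j' ∨ j' + 1 = j then (1:ℝ) else 0)
      = (if j' = j then W j else 0) + (if j' = j + 1 then 1 else 0)
        + (if j = j' + 1 then 1 else 0) := by
      split_ifs <;> first | (exfalso; omega) | (subst_vars; norm_num)
    rw [this]
    split_ifs <;> ring
  simp only [split, Finset.sum_add_distrib]
  have s1 : ∑ j ∈ range N, ∑ j' ∈ range N, (if j' = j then W j * z j * z j' else 0)
      = ∑ j ∈ range N, W j * z j ^ 2 := by
    apply Finset.sum_congr rfl
    intro j hj
    rw [Finset.sum_ite_eq' (range N) j (fun j' => W j * z j * z j')]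
    rw [if_pos hj]
    ring
  have s2 : ∑ j ∈ range N, ∑ j' ∈ range N, (if j' = j + 1 then z j * z j' else 0)
      = ∑ j ∈ range (N-1), z j * z (j+1) := by
    rw [← trunc_sum N (fun j => z j * z (j+1))]
    apply Finset.sum_congr rfl
    intro j hj
    rw [Finset.sum_ite_eq' (range N) (j+1) (fun j' => z j * z j')]
    simp only [Finset.mem_range]
  have s3 : ∑ j ∈ range N, ∑ j' ∈ range N, (if j = j' + 1 then z j * z j' else 0)
      = ∑ j ∈ range (N-1), z j * z (j+1) := by
    rw [Finset.sum_comm]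
    have inner : ∀ j' ∈ range N, ∑ j ∈ range N, (if j = j' + 1 then z j * z j' else 0)
        = (if j' + 1 < N then z j' * z (j'+1) else 0) := by
      intro j' _
      rw [Finset.sum_ite_eq' (range N) (j'+1) (fun j => z j * z j')]
      simp only [Finset.mem_range]
      split_ifs with h
      · ring
      · rfl
    rw [Finset.sum_congr rfl inner, trunc_sum N (fun j => z j * z (j+1))]
  rw [s1, s2, s3]
  ring

theorem step1 (q r : ℕ) (x : StarVertex 3 ![1, 1, q + r + 1] → ℝ) :
   ∑ v, ∑ v', ((starMatrix 3 ![1, 1, q + r + 1] (-2)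
          ![fun _ => -2,
            fun _ => -((r : ℤ) + 3),
            fun j => if j < q then -2 else if j = q then -3 else
              if j < q + r then -2 else -((q : ℤ) + 5)] v v' : ℤ) : ℝ) * x v * x v'
    = -2*(x none)^2 - 2*(x (some ⟨0,⟨0, Nat.one_pos⟩⟩))^2 - ((r:ℝ)+3)*(x (some ⟨1,⟨0, Nat.one_pos⟩⟩))^2
      + 2*(x none)*(x (some ⟨0,⟨0, Nat.one_pos⟩⟩)) + 2*(x none)*(x (some ⟨1,⟨0, Nat.one_pos⟩⟩))
      + 2*(x none)*(zfun q r x 0)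
      + (∑ j ∈ range (q+r+1), Wfun q r j * (zfun q r x j)^2
         + 2 * ∑ j ∈ range (q+r), zfun q r x j * zfun q r x (j+1)) := by
  have hz : ∀ s : Fin (![1, 1, q + r + 1] 2), x (some ⟨2, s⟩) = zfun q r x (s:ℕ) := by
    intro s
    have h : (s:ℕ) < q + r + 1 := s.isLt
    simp only [zfun, dif_pos h, Fin.eta]
  have hw : ∀ j, (![fun _ => (-2:ℤ), fun _ => -((r : ℤ) + 3),
      fun j => if j < q then -2 else if j = q then -3 else
        if j < q + r then -2 else -((q : ℤ) + 5)] : Fin 3 → ℕ → ℤ) 2 j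
      = if j < q then -2 else if j = q then -3 else
        if j < q + r then -2 else -((q : ℤ) + 5) := fun _ => rfl
  have hw0 : ∀ j, (![fun _ => (-2:ℤ), fun _ => -((r : ℤ) + 3),
      fun j => if j < q then -2 else if j = q then -3 else
        if j < q + r then -2 else -((q : ℤ) + 5)] : Fin 3 → ℕ → ℤ) 0 j = -2 := fun _ => rfl
  have hw1 : ∀ j, (![fun _ => (-2:ℤ), fun _ => -((r : ℤ) + 3),
      fun j => if j < q then -2 else if j = q then -3 else
        if j < q + r then -2 else -((q : ℤ) + 5)] : Fin 3 → ℕ → ℤ) 1 j = -((r : ℤ) + 3) := fun _ => rfl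
  have hu0 : ∀ f : Fin (![1, 1, q + r + 1] 0) → ℝ, ∑ i, f i = f ⟨0, Nat.one_pos⟩ := fun f => Fin.sum_univ_one f
  have hu1 : ∀ f : Fin (![1, 1, q + r + 1] 1) → ℝ, ∑ i, f i = f ⟨0, Nat.one_pos⟩ := fun f => Fin.sum_univ_one f
  simp only [Fintype.sum_option, Finset.univ_sigma_univ.symm, Finset.sum_sigma,
    Fin.sum_univ_three, hu0, hu1, starMatrix, Matrix.of_apply, hw, hw0, hw1]
  norm_num
  simp only [hz]
  have B1 : (∑ x_1 : Fin (![1, 1, q + r + 1] 2),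
        if (x_1:ℕ) = 0 then x none * zfun q r x ↑x_1 else 0) = x none * zfun q r x 0 := by
    rw [Fin.sum_univ_eq_sum_range (fun j => if j = 0 then x none * zfun q r x j else 0)
        (![1, 1, q + r + 1] 2)]
    rw [show (![1, 1, q + r + 1] 2) = q + r + 1 from rfl]
    rw [Finset.sum_ite_eq' (range (q+r+1)) 0 (fun j => x none * zfun q r x j)]
    rw [if_pos (by simp)]
  have Bf : (∑ x_1 : Fin (![1, 1, q + r + 1] 2),
          ((if (x_1:ℕ) = 0 then zfun q r x ↑x_1 * x none else 0) +
            ∑ x_2 : Fin (![1, 1, q + r + 1] 2),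
              if (x_1:ℕ) = (x_2:ℕ) then
                if (x_1:ℕ) < q then -(2 * zfun q r x ↑x_1 * zfun q r x ↑x_2)
                else
                  if (x_1:ℕ) = q then -(3 * zfun q r x ↑x_1 * zfun q r x ↑x_2)
                  else
                    if (x_1:ℕ) < q + r then -(2 * zfun q r x ↑x_1 * zfun q r x ↑x_2)
                    else (-5 + -(q:ℝ)) * zfun q r x ↑x_1 * zfun q r x ↑x_2
              else if (x_1:ℕ) + 1 = (x_2:ℕ) ∨ (x_2:ℕ) + 1 = (x_1:ℕ) then
                zfun q r x ↑x_1 * zfun q r x ↑x_2 else 0))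
      = zfun q r x 0 * x none
        + (∑ j ∈ range (q+r+1), Wfun q r j * (zfun q r x j)^2
           + 2 * ∑ j ∈ range (q+r), zfun q r x j * zfun q r x (j+1)) := by
    rw [Finset.sum_add_distrib]
    have p1 : (∑ x_1 : Fin (![1, 1, q + r + 1] 2),
          if (x_1:ℕ) = 0 then zfun q r x ↑x_1 * x none else 0) = zfun q r x 0 * x none := by
      rw [Fin.sum_univ_eq_sum_range (fun j => if j = 0 then zfun q r x j * x none else 0)
          (![1, 1, q + r + 1] 2)]
      rw [show (![1, 1, q + r + 1] 2) = q + r + 1 from rfl]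
      rw [Finset.sum_ite_eq' (range (q+r+1)) 0 (fun j => zfun q r x j * x none)]
      rw [if_pos (by simp)]
    have p2 : (∑ x_1 : Fin (![1, 1, q + r + 1] 2), ∑ x_2 : Fin (![1, 1, q + r + 1] 2),
              if (x_1:ℕ) = (x_2:ℕ) then
                if (x_1:ℕ) < q then -(2 * zfun q r x ↑x_1 * zfun q r x ↑x_2)
                else
                  if (x_1:ℕ) = q then -(3 * zfun q r x ↑x_1 * zfun q r x ↑x_2)
                  else
                    if (x_1:ℕ) < q + r then -(2 * zfun q r x ↑x_1 * zfun q r x ↑x_2)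
                    else (-5 + -(q:ℝ)) * zfun q r x ↑x_1 * zfun q r x ↑x_2
              else if (x_1:ℕ) + 1 = (x_2:ℕ) ∨ (x_2:ℕ) + 1 = (x_1:ℕ) then
                zfun q r x ↑x_1 * zfun q r x ↑x_2 else 0)
        = ∑ j ∈ range (q+r+1), Wfun q r j * (zfun q r x j)^2
           + 2 * ∑ j ∈ range (q+r), zfun q r x j * zfun q r x (j+1) := by
      rw [double_fin_to_range (![1, 1, q + r + 1] 2) (fun a b =>
              if a = b then
                if a < q then -(2 * zfun q r x a * zfun q r x b)
                else
                  if a = q then -(3 * zfun q r x a * zfun q r x b)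
                  else
                    if a < q + r then -(2 * zfun q r x a * zfun q r x b)
                    else (-5 + -(q:ℝ)) * zfun q r x a * zfun q r x b
              else if a + 1 = b ∨ b + 1 = a then
                zfun q r x a * zfun q r x b else 0)]
      rw [show (![1, 1, q + r + 1] 2) = q + r + 1 from rfl]
      have pt : ∀ a b : ℕ,
          (if a = b then
                if a < q then -(2 * zfun q r x a * zfun q r x b)
                else
                  if a = q then -(3 * zfun q r x a * zfun q r x b)
                  else
                    if a < q + r then -(2 * zfun q r x a * zfun q r x b)
                    else (-5 + -(q:ℝ)) * zfun q r x a * zfun q r x b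
              else if a + 1 = b ∨ b + 1 = a then
                zfun q r x a * zfun q r x b else 0)
          = (if a = b then Wfun q r a
              else if a + 1 = b ∨ b + 1 = a then 1 else 0) * zfun q r x a * zfun q r x b := by
        intro a b
        unfold Wfun
        split_ifs <;> ring
      simp only [pt]
      rw [path_sum_range (q+r+1) (Wfun q r) (zfun q r x)]
      norm_num
    rw [p1, p2]
  linear_combination B1 + Bf



def aC (q r : ℕ) : ℝ := (2*r+1)*q + 8*r + 6
def bC (q r : ℕ) : ℝ := r*q + 4*r + 1
def cC (q r : ℕ) : ℝ := (r+1)*q + 4*r + 5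

/-- the Cholesky pivots along the long leg, indexed from the centre -/
noncomputable def Dfun (q r : ℕ) : ℕ → ℝ := fun j =>
  if j ≤ q then (((q-j : ℕ) : ℝ) * cC q r + aC q r)/(((q-j : ℕ) : ℝ) * cC q r + bC q r)
  else (((q+r-j : ℕ) : ℝ) * ((q:ℝ)+4) + ((q:ℝ)+5))/(((q+r-j : ℕ) : ℝ) * ((q:ℝ)+4) + 1)

lemma aC_pos (q r : ℕ) : 0 < aC q r := by unfold aC; positivity
lemma bC_pos (q r : ℕ) : 0 < bC q r := by unfold bC; positivity
lemma cC_pos (q r : ℕ) : 0 < cC q r := by unfold cC; positivity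
lemma abc (q r : ℕ) : aC q r = bC q r + cC q r := by unfold aC bC cC; ring

lemma Dfun_pos (q r : ℕ) (j : ℕ) : 0 < Dfun q r j := by
  unfold Dfun
  split_ifs with h
  · have := aC_pos q r; have := bC_pos q r; have := cC_pos q r
    have h1 : (0:ℝ) ≤ ((q-j : ℕ) : ℝ) := Nat.cast_nonneg _
    apply div_pos <;> nlinarith
  · have h1 : (0:ℝ) ≤ ((q+r-j : ℕ) : ℝ) := Nat.cast_nonneg _
    have h2 : (0:ℝ) ≤ (q:ℝ) := Nat.cast_nonneg _
    apply div_pos <;> nlinarith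

lemma Dfun_last (q r : ℕ) (hr : 1 ≤ r) : Dfun q r (q+r) = -(Wfun q r (q+r)) := by
  unfold Dfun Wfun
  rw [if_neg (by omega), if_neg (by omega), if_neg (by omega), if_neg (by omega)]
  rw [show q + r - (q+r) = 0 from by omega]
  push_cast
  norm_num

lemma Dfun_rec (q r : ℕ) (hr : 1 ≤ r) (j : ℕ) (hj : j < q + r) :
    Dfun q r j + 1/(Dfun q r (j+1)) = -(Wfun q r j) := by
  have ha := aC_pos q r; have hb := bC_pos q r; have hc := cC_pos q r
  have habc := abc q r
  have hq4 : (0:ℝ) < (q:ℝ) + 4 := by positivity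
  unfold Dfun Wfun
  rcases lt_trichotomy j q with h | h | h
  · -- j < q : both indices in first regime, weight -2
    rw [if_pos (by omega : j ≤ q), if_pos (by omega : j+1 ≤ q), if_pos h]
    have e1 : ((q - j : ℕ) : ℝ) = ((q - (j+1) : ℕ) : ℝ) + 1 := by
      have : q - j = (q - (j+1)) + 1 := by omega
      rw [this]; push_cast; ring
    set s : ℝ := ((q - (j+1) : ℕ) : ℝ) with hs
    have hs0 : 0 ≤ s := Nat.cast_nonneg _
    rw [e1]
    rw [habc]
    have d1 : 0 < (s+1) * cC q r + (bC q r + cC q r) := by nlinarith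
    have d2 : 0 < s * cC q r + (bC q r + cC q r) := by nlinarith
    have d2' : 0 < s * cC q r + bC q r := by nlinarith
    field_simp
    ring
  · -- j = q : junction, weight -3
    rw [if_pos (by omega : j ≤ q), if_neg (by omega : ¬ (j+1 ≤ q)), if_neg (by omega), if_pos h]
    rw [show q - j = 0 from by omega, show q + r - (j+1) = r - 1 from by omega]
    have e1 : ((r - 1 : ℕ) : ℝ) = (r:ℝ) - 1 := by
      have : (r:ℝ) ≥ 1 := by exact_mod_cast hr
      push_cast [hr]; ring
    rw [e1]
    have key1 : ((r:ℝ)-1) * ((q:ℝ)+4) + ((q:ℝ)+5) = bC q r := by unfold bC; push_cast; ring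
    have hr1 : (1:ℝ) ≤ (r:ℝ) := by exact_mod_cast hr
    have d1 : 0 < ((r:ℝ)-1) * ((q:ℝ)+4) + 1 := by nlinarith
    rw [key1]
    have hACB : aC q r + (((r:ℝ)-1) * ((q:ℝ)+4) + 1) = 3 * bC q r := by
      unfold aC bC; push_cast; ring
    push_cast
    rw [one_div_div,
      show (0:ℝ) * cC q r + aC q r = aC q r from by ring,
      show (0:ℝ) * cC q r + bC q r = bC q r from by ring,
      ← add_div, div_eq_iff hb.ne']
    linarith [hACB]
  · -- q < j : second regime, weight -2
    rw [if_neg (by omega), if_neg (by omega), if_neg (by omega), if_neg (by omega),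
        if_pos (by omega : j < q + r)]
    have e1 : ((q + r - j : ℕ) : ℝ) = ((q + r - (j+1) : ℕ) : ℝ) + 1 := by
      have : q + r - j = (q + r - (j+1)) + 1 := by omega
      rw [this]; push_cast; ring
    set k : ℝ := ((q + r - (j+1) : ℕ) : ℝ) with hk
    have hk0 : 0 ≤ k := Nat.cast_nonneg _
    rw [e1]
    have d1 : 0 < (k+1) * ((q:ℝ)+4) + ((q:ℝ)+5) := by nlinarith
    have d2 : 0 < k * ((q:ℝ)+4) + ((q:ℝ)+5) := by nlinarith
    have d3 : 0 < k * ((q:ℝ)+4) + 1 := by nlinarith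
    field_simp
    ring


open Finset in
lemma chain_sq : ∀ (N : ℕ) (D W z : ℕ → ℝ) (xc : ℝ),
    (∀ j, D j ≠ 0) →
    (∀ j, j < N → D j + 1/(D (j+1)) = -W j) →
    (D N = -W N) →
    ∑ j ∈ range (N+1), W j * z j ^ 2 + 2*xc*z 0 + 2 * ∑ j ∈ range N, z j * z (j+1)
      = xc^2/(D 0) - ∑ j ∈ range (N+1),
          D j * (z j - (if j = 0 then xc else z (j-1))/(D j)) ^ 2 := by
  intro N
  induction N with
  | zero =>
    intro D W z xc hD hrec hlast
    have expand : D 0 * (z 0 - xc/(D 0))^2 = D 0 * z 0^2 - 2*z 0*xc + xc^2/(D 0) := by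
      field_simp [hD 0]
      ring
    rw [show (0:ℕ)+1 = 1 from rfl]
    simp only [Finset.sum_range_one, Finset.range_zero, Finset.sum_empty, if_pos rfl]
    rw [show W 0 = -D 0 by linarith [hlast]]
    simp only [if_true]
    rw [expand]
    ring
  | succ N ih =>
    intro D W z xc hD hrec hlast
    have key := ih (fun j => D (j+1)) (fun j => W (j+1)) (fun j => z (j+1)) (z 0)
      (fun j => hD _) (fun j hj => hrec (j+1) (by omega)) hlast
    have e1 : ∑ j ∈ range (N+2), W j * z j ^ 2
        = (∑ j ∈ range (N+1), W (j+1) * z (j+1) ^ 2) + W 0 * z 0 ^ 2 :=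
      Finset.sum_range_succ' _ _
    have e2 : ∑ j ∈ range (N+1), z j * z (j+1)
        = (∑ j ∈ range N, z (j+1) * z (j+2)) + z 0 * z 1 :=
      Finset.sum_range_succ' _ _
    have e3 : ∑ j ∈ range (N+2),
          D j * (z j - (if j = 0 then xc else z (j-1))/(D j)) ^ 2
        = (∑ j ∈ range (N+1), D (j+1) * (z (j+1) - (z j)/(D (j+1))) ^ 2)
          + D 0 * (z 0 - xc/(D 0)) ^ 2 := by
      rw [Finset.sum_range_succ' _ (N+1)]
      simp
    have e4 : ∑ j ∈ range (N+1),
          D (j+1) * (z (j+1) - (if j = 0 then z 0 else z (j-1+1))/(D (j+1))) ^ 2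
        = ∑ j ∈ range (N+1), D (j+1) * (z (j+1) - (z j)/(D (j+1))) ^ 2 := by
      apply Finset.sum_congr rfl
      intro j _
      rcases Nat.eq_zero_or_pos j with h | h
      · subst h; simp
      · have h2 : j - 1 + 1 = j := by omega
        rw [if_neg (by omega), h2]
    rw [e1, e2, e3]
    rw [e4] at key
    have h0 := hrec 0 (by omega)
    have expand : D 0 * (z 0 - xc/(D 0))^2 = D 0 * z 0^2 - 2*z 0*xc + xc^2/(D 0) := by
      field_simp [hD 0]
      ring
    have h0' : D 0 + 1/(D 1) = -W 0 := h0
    have hW0 : W 0 = -(D 0) - 1/(D 1) := by linarith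
    beta_reduce at key
    rw [hW0, expand]
    linear_combination key

set_option maxHeartbeats 1000000 in
/-- The intersection matrix of the star-shaped weighted tree `Λ_{0,q,r}` for `r ≥ 1` (central
vertex of weight `-2`; legs: a single vertex of weight `-2`; a single vertex of weight
`-(r+3)`; and a path with weights `-2` (`q` times), `-3`, `-2` (`r-1` times), `-(q+5)`)
is negative definite. -/
theorem Lambda_0qr_negative_definite (q r : ℕ) (hr : 1 ≤ r) :
    ∀ x : StarVertex 3 ![1, 1, q + r + 1] → ℝ, x ≠ 0 →
      ∑ v, ∑ v', ((starMatrix 3 ![1, 1, q + r + 1] (-2)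
          ![fun _ => -2,
            fun _ => -((r : ℤ) + 3),
            fun j => if j < q then -2 else if j = q then -3 else
              if j < q + r then -2 else -((q : ℤ) + 5)] v v' : ℤ) : ℝ)
          * x v * x v' < 0 := by

  intro x hx
  have hD : ∀ j, Dfun q r j ≠ 0 := fun j => (Dfun_pos q r j).ne'
  have hDpos := Dfun_pos q r
  have hchain := chain_sq (q+r) (Dfun q r) (Wfun q r) (zfun q r x) (x none) hD
      (fun j hj => Dfun_rec q r hr j hj) (Dfun_last q r hr)
  rw [step1 q r x]
  -- abbreviations
  set xc := x none with hxc
  set xA := x (some ⟨0, ⟨0, Nat.one_pos⟩⟩) with hxA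
  set xB := x (some ⟨1, ⟨0, Nat.one_pos⟩⟩) with hxB
  set Ssq := ∑ j ∈ Finset.range (q+r+1),
      Dfun q r j * (zfun q r x j - (if j = 0 then xc else zfun q r x (j-1))/(Dfun q r j)) ^ 2
    with hSsq
  have hr3 : (0:ℝ) < (r:ℝ) + 3 := by positivity
  have hD0 := hDpos 0
  have hd0 : (0:ℝ) < 3/2 - 1/((r:ℝ)+3) - 1/(Dfun q r 0) := by
    have hD0val : Dfun q r 0 = ((q:ℝ) * cC q r + aC q r)/((q:ℝ) * cC q r + bC q r) := by
      unfold Dfun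
      rw [if_pos (Nat.zero_le q)]
      norm_num
    have ha := aC_pos q r; have hb := bC_pos q r; have hc := cC_pos q r
    have hq0 : (0:ℝ) ≤ (q:ℝ) := Nat.cast_nonneg _
    have h1 : (0:ℝ) < (q:ℝ) * cC q r + aC q r := by nlinarith
    have h2 : (0:ℝ) < (q:ℝ) * cC q r + bC q r := by nlinarith
    have e1 : 1/(Dfun q r 0) = ((q:ℝ) * cC q r + bC q r)/((q:ℝ) * cC q r + aC q r) := by
      rw [hD0val, one_div_div]
    rw [e1]
    have h3 : ((q:ℝ) * cC q r + bC q r)/((q:ℝ) * cC q r + aC q r) < 1 := by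
      rw [div_lt_one h1]
      nlinarith [abc q r]
    have h4 : 1/((r:ℝ)+3) ≤ 1/4 := by
      rw [div_le_div_iff₀ hr3 (by norm_num)]
      have : (1:ℝ) ≤ (r:ℝ) := by exact_mod_cast hr
      linarith
    linarith
  -- the sum-of-squares form
  have hT : -2*xc^2 - 2*xA^2 - ((r:ℝ)+3)*xB^2 + 2*xc*xA + 2*xc*xB + 2*xc*(zfun q r x 0)
      + (∑ j ∈ Finset.range (q+r+1), Wfun q r j * (zfun q r x j)^2
         + 2 * ∑ j ∈ Finset.range (q+r), zfun q r x j * zfun q r x (j+1))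
      = -((3/2 - 1/((r:ℝ)+3) - 1/(Dfun q r 0)) * xc^2
          + 2*(xA - xc/2)^2 + ((r:ℝ)+3)*(xB - xc/((r:ℝ)+3))^2 + Ssq) := by
    rw [hSsq]
    have expand1 : ((r:ℝ)+3)*(xB - xc/((r:ℝ)+3))^2
        = ((r:ℝ)+3)*xB^2 - 2*xB*xc + xc^2/((r:ℝ)+3) := by
      field_simp
      ring
    rw [expand1]
    have expand2 : (1/(Dfun q r 0)) * xc^2 = xc^2/(Dfun q r 0) := by ring
    linear_combination hchain + expand2
  rw [hT]
  -- positivity of the pieces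
  have c1 : 0 ≤ (3/2 - 1/((r:ℝ)+3) - 1/(Dfun q r 0)) * xc^2 := by positivity
  have c2 : 0 ≤ 2*(xA - xc/2)^2 := by positivity
  have c3 : 0 ≤ ((r:ℝ)+3)*(xB - xc/((r:ℝ)+3))^2 := by positivity
  have c4 : 0 ≤ Ssq := by
    rw [hSsq]
    apply Finset.sum_nonneg
    intro j _
    have := hDpos j
    positivity
  rw [neg_lt, neg_zero]
  -- strict positivity : otherwise x = 0
  rcases lt_or_eq_of_le (by linarith : (0:ℝ) ≤ (3/2 - 1/((r:ℝ)+3) - 1/(Dfun q r 0)) * xc^2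
      + 2*(xA - xc/2)^2 + ((r:ℝ)+3)*(xB - xc/((r:ℝ)+3))^2 + Ssq) with h | h
  · exact h
  exfalso
  have e1 : (3/2 - 1/((r:ℝ)+3) - 1/(Dfun q r 0)) * xc^2 = 0 := by linarith
  have e2 : 2*(xA - xc/2)^2 = 0 := by linarith
  have e3 : ((r:ℝ)+3)*(xB - xc/((r:ℝ)+3))^2 = 0 := by linarith
  have e4 : Ssq = 0 := by linarith
  have hxc0 : xc = 0 := by
    have := mul_eq_zero.mp e1
    rcases this with h' | h'
    · linarith
    · exact pow_eq_zero_iff (by norm_num) |>.mp h'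
  have hxA0 : xA = 0 := by
    have h' : (xA - xc/2)^2 = 0 := by linarith
    have := pow_eq_zero_iff (n := 2) (by norm_num) |>.mp h'
    rw [hxc0] at this
    linarith
  have hxB0 : xB = 0 := by
    have h' : (xB - xc/((r:ℝ)+3))^2 = 0 := by
      rcases mul_eq_zero.mp e3 with h' | h'
      · linarith
      · exact h'
    have h2 := pow_eq_zero_iff (n := 2) (by norm_num) |>.mp h'
    rw [hxc0] at h2
    have h3 : (0:ℝ)/((r:ℝ)+3) = 0 := zero_div _
    linarith [h2, h3]
  have hterm : ∀ j ∈ Finset.range (q+r+1),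
      Dfun q r j * (zfun q r x j - (if j = 0 then xc else zfun q r x (j-1))/(Dfun q r j)) ^ 2 = 0 := by
    rw [hSsq] at e4
    intro j hj
    have hnn : ∀ j ∈ Finset.range (q+r+1), 0 ≤
        Dfun q r j * (zfun q r x j - (if j = 0 then xc else zfun q r x (j-1))/(Dfun q r j)) ^ 2 := by
      intro j _
      have := hDpos j
      positivity
    exact (Finset.sum_eq_zero_iff_of_nonneg hnn).mp e4 j hj
  have hzrec : ∀ j, j < q+r+1 →
      zfun q r x j = (if j = 0 then xc else zfun q r x (j-1))/(Dfun q r j) := by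
    intro j hj
    have h' := hterm j (Finset.mem_range.mpr hj)
    have h'' := (mul_eq_zero.mp h').resolve_left (hD j)
    have := pow_eq_zero_iff (n := 2) (by norm_num) |>.mp h''
    linarith
  have hz0 : ∀ j, j < q+r+1 → zfun q r x j = 0 := by
    intro j
    induction j with
    | zero =>
      intro hj
      rw [hzrec 0 hj, if_pos rfl, hxc0, zero_div]
    | succ n ih =>
      intro hj
      rw [hzrec (n+1) hj, if_neg (by omega)]
      simp only [Nat.add_sub_cancel]
      rw [ih (by omega), zero_div]
  apply hx
  funext v
  show x v = 0
  match v with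
  | none => exact hxc0
  | some ⟨i, j⟩ =>
    obtain ⟨iv, hiv⟩ := i
    interval_cases iv
    · have hj1 : (j:ℕ) < 1 := j.isLt
      have : j = ⟨0, Nat.one_pos⟩ := Fin.ext (show (j:ℕ) = 0 by omega)
      rw [this]
      exact hxA0
    · have hj1 : (j:ℕ) < 1 := j.isLt
      have : j = ⟨0, Nat.one_pos⟩ := Fin.ext (show (j:ℕ) = 0 by omega)
      rw [this]
      exact hxB0
    · have hj1 : (j:ℕ) < q+r+1 := j.isLt
      have hrw : x (some ⟨⟨2, hiv⟩, j⟩) = zfun q r x (j:ℕ) := by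
        rw [zfun]
        rw [dif_pos hj1]
        rfl
      rw [hrw]
      
      exact hz0 _ hj1
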